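/- arXiv:2412.01936 — 2 statements merged into one kernel-verified Lean document; each statement's English description precedes it below -/
import Mathlib

section
/- A convex quadratic function that is bounded below on an affine subspace of R^n attains its minimum on that subspace. -/
open Matrix

/-- Symmetry of the quadratic form for a real symmetric matrix. -/
lemma quad_symm_aux {n : ℕ} {Q : Matrix (Fin n) (Fin n) ℝ} (hQ : Qᵀ = Q)
    (x y : Fin n → ℝ) : x ⬝ᵥ (Q *ᵥ y) = y ⬝ᵥ (Q *ᵥ x) := by
  rw [Matrix.dotProduct_mulVec, ← Matrix.mulVec_transpose, hQ, dotProduct_comm]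

/-- Key existence lemma: on a subspace `W`, if the linear part `d` is orthogonal to
the kernel of the (psd, symmetric) quadratic part restricted to `W`, then the
"normal equations" have a solution in `W`. -/
lemma normal_eq_solvable {n : ℕ} (Q : Matrix (Fin n) (Fin n) ℝ) (hQ : Q.PosSemidef)
    (W : Submodule ℝ (Fin n → ℝ)) (d : Fin n → ℝ)
    (h0 : ∀ u ∈ W, Q *ᵥ u = 0 → d ⬝ᵥ u = 0) :
    ∃ v ∈ W, ∀ w ∈ W, (Q *ᵥ v + d) ⬝ᵥ w = 0 := by
  have hQsymm : Qᵀ = Q := by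
    have := hQ.1
    rwa [Matrix.IsHermitian, conjTranspose_eq_transpose_of_trivial] at this
  -- the bilinear form restricted to W, as a map W →ₗ Dual W
  set β : ↥W →ₗ[ℝ] Module.Dual ℝ ↥W :=
    (Matrix.toLinearMap₂' ℝ Q).compl₁₂ W.subtype W.subtype with hβ
  have hβ_apply : ∀ v w : ↥W, β v w = (v : Fin n → ℝ) ⬝ᵥ (Q *ᵥ (w : Fin n → ℝ)) := by
    intro v w
    simp [hβ, LinearMap.compl₁₂_apply, Matrix.toLinearMap₂'_apply']
  -- the linear functional w ↦ d ⬝ᵥ w on W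
  set φ : Module.Dual ℝ ↥W :=
    { toFun := fun w => d ⬝ᵥ (w : Fin n → ℝ)
      map_add' := by intro a b; simp [dotProduct_add]
      map_smul' := by intro r a; simp [dotProduct_smul] } with hφ
  -- β is symmetric
  have hsymm : ∀ v w : ↥W, β v w = β w v := by
    intro v w; rw [hβ_apply, hβ_apply, quad_symm_aux hQsymm]
  -- β equals its dualMap composed with evaluation
  have hcomp : β = β.dualMap.comp (Module.Dual.eval ℝ ↥W) := by
    ext v w
    simp only [LinearMap.comp_apply, LinearMap.dualMap_apply, Module.Dual.eval_apply]
    exact hsymm v w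
  have heval : LinearMap.range (Module.Dual.eval ℝ ↥W) = ⊤ :=
    LinearMap.range_eq_top.mpr (Module.bijective_dual_eval ℝ ↥W).2
  have hrange : LinearMap.range β = (LinearMap.ker β).dualAnnihilator := by
    rw [hcomp, LinearMap.range_comp_of_range_eq_top _ heval,
      LinearMap.range_dualMap_eq_dualAnnihilator_ker, ← hcomp]
  -- -φ lies in the dual annihilator of ker β
  have hmem : -φ ∈ (LinearMap.ker β).dualAnnihilator := by
    rw [Submodule.mem_dualAnnihilator]
    intro u hu
    rw [LinearMap.mem_ker] at hu
    have huu : (u : Fin n → ℝ) ⬝ᵥ (Q *ᵥ (u : Fin n → ℝ)) = 0 := by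
      rw [← hβ_apply]; rw [hu]; rfl
    have hQu : Q *ᵥ (u : Fin n → ℝ) = 0 := by
      have := (hQ.dotProduct_mulVec_zero_iff (u : Fin n → ℝ)).mp (by simpa using huu)
      exact this
    have := h0 u u.2 hQu
    simp [hφ, this]
  rw [← hrange] at hmem
  obtain ⟨v, hv⟩ := hmem
  refine ⟨v, v.2, ?_⟩
  intro w hw
  have := congrArg (fun ψ => ψ ⟨w, hw⟩) hv
  rw [hβ_apply] at this
  have hφw : φ ⟨w, hw⟩ = d ⬝ᵥ w := rfl
  have hneg : (-φ) ⟨w, hw⟩ = -(d ⬝ᵥ w) := by simp [hφw]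
  rw [hneg] at this
  rw [add_dotProduct]
  have hvw : (Q *ᵥ (v : Fin n → ℝ)) ⬝ᵥ w = (v : Fin n → ℝ) ⬝ᵥ (Q *ᵥ w) := by
    rw [dotProduct_comm, quad_symm_aux hQsymm]
  rw [hvw, this]
  ring

/-- A convex quadratic function that is bounded below on a nonempty affine subspace
`{x : A x = b}` of `ℝⁿ` attains its minimum on that subspace. -/
theorem quadratic_bddBelow_attains_min {n m : ℕ}
    (Q : Matrix (Fin n) (Fin n) ℝ) (hQ : Q.PosSemidef)
    (c : Fin n → ℝ) (A : Matrix (Fin m) (Fin n) ℝ) (b : Fin m → ℝ)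
    (hS : ∃ x : Fin n → ℝ, A *ᵥ x = b)
    (hbdd : ∃ L : ℝ, ∀ x : Fin n → ℝ, A *ᵥ x = b →
      L ≤ (1 / 2) * (x ⬝ᵥ (Q *ᵥ x)) + c ⬝ᵥ x) :
    ∃ xstar : Fin n → ℝ, A *ᵥ xstar = b ∧
      ∀ x : Fin n → ℝ, A *ᵥ x = b →
        (1 / 2) * (xstar ⬝ᵥ (Q *ᵥ xstar)) + c ⬝ᵥ xstar
          ≤ (1 / 2) * (x ⬝ᵥ (Q *ᵥ x)) + c ⬝ᵥ x := by
  obtain ⟨x0, hx0⟩ := hS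
  obtain ⟨L, hL⟩ := hbdd
  have hQsymm : Qᵀ = Q := by
    have := hQ.1
    rwa [Matrix.IsHermitian, conjTranspose_eq_transpose_of_trivial] at this
  set W : Submodule ℝ (Fin n → ℝ) := LinearMap.ker A.mulVecLin with hW
  set d : Fin n → ℝ := Q *ᵥ x0 + c with hd
  have hWmem : ∀ u, u ∈ W ↔ A *ᵥ u = 0 := by
    intro u; rw [hW, LinearMap.mem_ker, Matrix.mulVecLin_apply]
  -- boundedness implies d ⟂ (W ∩ ker Q)
  have h0 : ∀ u ∈ W, Q *ᵥ u = 0 → d ⬝ᵥ u = 0 := by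
    intro u huW hQu
    have hAu : A *ᵥ u = 0 := (hWmem u).mp huW
    by_contra hne
    set s := d ⬝ᵥ u with hs
    -- for all t, L ≤ f(x0) + t * s
    have key : ∀ t : ℝ, L ≤ ((1 / 2) * (x0 ⬝ᵥ (Q *ᵥ x0)) + c ⬝ᵥ x0) + t * s := by
      intro t
      have hfeas : A *ᵥ (x0 + t • u) = b := by
        rw [Matrix.mulVec_add, Matrix.mulVec_smul, hAu, hx0]; simp
      have := hL (x0 + t • u) hfeas
      have hexp : (1 / 2) * ((x0 + t • u) ⬝ᵥ (Q *ᵥ (x0 + t • u))) + c ⬝ᵥ (x0 + t • u)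
          = ((1 / 2) * (x0 ⬝ᵥ (Q *ᵥ x0)) + c ⬝ᵥ x0) + t * s := by
        have h1 : u ⬝ᵥ (Q *ᵥ x0) = 0 := by
          rw [quad_symm_aux hQsymm, hQu, dotProduct_zero]
        have h2 : (Q *ᵥ x0) ⬝ᵥ u = 0 := by rw [dotProduct_comm]; exact h1
        rw [hs, hd]
        simp only [Matrix.mulVec_add, Matrix.mulVec_smul, hQu, smul_zero, add_zero,
          dotProduct_add, add_dotProduct, smul_dotProduct,
          dotProduct_smul, smul_eq_mul, h1, h2]
        ring
      linarith [hexp ▸ this]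
    -- contradiction: s ≠ 0
    rcases lt_or_gt_of_ne hne with h | h
    · have := key ((L - ((1 / 2) * (x0 ⬝ᵥ (Q *ᵥ x0)) + c ⬝ᵥ x0) - 1) / s)
      rw [div_mul_cancel₀ _ (ne_of_lt h)] at this
      linarith
    · have := key ((L - ((1 / 2) * (x0 ⬝ᵥ (Q *ᵥ x0)) + c ⬝ᵥ x0) - 1) / s)
      rw [div_mul_cancel₀ _ (ne_of_gt h)] at this
      linarith
  obtain ⟨v, hvW, hvopt⟩ := normal_eq_solvable Q hQ W d h0
  refine ⟨x0 + v, ?_, ?_⟩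
  · rw [Matrix.mulVec_add, (hWmem v).mp hvW, hx0]; simp
  · intro x hx
    set xs := x0 + v with hxs
    set h : Fin n → ℝ := x - xs with hh
    have hhW : h ∈ W := by
      rw [hWmem, hh, Matrix.mulVec_sub, hx, hxs, Matrix.mulVec_add,
        (hWmem v).mp hvW, hx0]
      simp
    have horth : (Q *ᵥ xs + c) ⬝ᵥ h = 0 := by
      have : Q *ᵥ xs + c = Q *ᵥ v + d := by
        rw [hxs, hd, Matrix.mulVec_add]; ring_nf
      rw [this]
      exact hvopt h hhW
    have hpsd : 0 ≤ h ⬝ᵥ (Q *ᵥ h) := by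
      have := hQ.dotProduct_mulVec_nonneg h
      simpa using this
    have hxeq : x = xs + h := by rw [hh]; ring_nf
    have hexp : (1 / 2) * (x ⬝ᵥ (Q *ᵥ x)) + c ⬝ᵥ x
        = ((1 / 2) * (xs ⬝ᵥ (Q *ᵥ xs)) + c ⬝ᵥ xs) + (Q *ᵥ xs + c) ⬝ᵥ h
          + (1 / 2) * (h ⬝ᵥ (Q *ᵥ h)) := by
      have h1 : h ⬝ᵥ (Q *ᵥ xs) = xs ⬝ᵥ (Q *ᵥ h) := quad_symm_aux hQsymm h xs
      have h2 : (Q *ᵥ xs) ⬝ᵥ h = xs ⬝ᵥ (Q *ᵥ h) := by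
        rw [dotProduct_comm]; exact h1
      rw [hxeq]
      simp only [Matrix.mulVec_add, dotProduct_add, add_dotProduct, h1, h2]
      ring
    rw [hexp]
    linarith
end

section
/- In the unconstrained reformulation of the least-squares imbalanced Universum QTSVM for the minority class, any optimal solution (z*, c*) with z* = 0 implies the vectors S_A e, S_B̃ e, and S_Û e are linearly dependent; equivalently, if these three vectors are linearly independent, then z* ≠ 0. -/
open Matrix

lemma quad_coeff (a b : ℝ) (h : ∀ t : ℝ, 0 ≤ a * t ^ 2 + b * t) : b = 0 := by
  by_contra hb
  have hpos : (0:ℝ) < |a| + 1 := by positivity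
  have h1 := h (-b / (|a| + 1))
  have hb2 : 0 < b ^ 2 := by positivity
  have e : a * (-b / (|a| + 1)) ^ 2 + b * (-b / (|a| + 1))
      = (a - (|a| + 1)) * b ^ 2 / (|a| + 1) ^ 2 := by
    field_simp
    ring
  rw [e] at h1
  have ha2 : a ≤ |a| := le_abs_self a
  have hneg : (a - (|a| + 1)) * b ^ 2 < 0 :=
    mul_neg_of_neg_of_pos (by linarith) hb2
  have := div_neg_of_neg_of_pos hneg (by positivity : (0:ℝ) < (|a| + 1) ^ 2)
  linarith

lemma dot_expand {n : ℕ} (w p : Fin n → ℝ) (t : ℝ) :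
    (w + t • p) ⬝ᵥ (w + t • p) = w ⬝ᵥ w + 2 * t * (w ⬝ᵥ p) + t ^ 2 * (p ⬝ᵥ p) := by
  simp [add_dotProduct, dotProduct_add, smul_dotProduct, dotProduct_smul, smul_eq_mul,
    dotProduct_comm p w]
  ring

lemma const_dot {n d : ℕ} (A : Matrix (Fin d) (Fin n) ℝ) (v : Fin d → ℝ) (c : ℝ) :
    (fun _ => c : Fin n → ℝ) ⬝ᵥ (Aᵀ *ᵥ v) = c * ((A *ᵥ (fun _ => 1)) ⬝ᵥ v) := by
  have h1 : (fun _ => c : Fin n → ℝ) = c • (fun _ => (1:ℝ)) := by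
    funext i; simp
  rw [h1, smul_dotProduct, dotProduct_mulVec, vecMul_transpose]
  simp [smul_eq_mul]


/-- Objective of the unconstrained minority-class reformulation
`Im-LS-𝔘-QTSVM-1` of the least-squares imbalanced Universum QTSVM. -/
noncomputable def minorityObj {d mA mB mU k : ℕ}
    (SA : Matrix (Fin d) (Fin mA) ℝ) (SB : Matrix (Fin d) (Fin mB) ℝ)
    (SU : Matrix (Fin d) (Fin mU) ℝ) (V : Matrix (Fin k) (Fin d) ℝ)
    (C1 Cu lam eps : ℝ) (z : Fin d → ℝ) (c : ℝ) : ℝ :=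
  (1 / 2) * ((SAᵀ *ᵥ z + fun _ => c) ⬝ᵥ (SAᵀ *ᵥ z + fun _ => c))
    + (C1 / 2) * (((fun _ => 1) + SBᵀ *ᵥ z + fun _ => c) ⬝ᵥ
        ((fun _ => 1) + SBᵀ *ᵥ z + fun _ => c))
    + (Cu / 2) * (((fun _ => -1 + eps) - (SUᵀ *ᵥ z + fun _ => c)) ⬝ᵥ
        ((fun _ => -1 + eps) - (SUᵀ *ᵥ z + fun _ => c)))
    + (lam / 2) * ((V *ᵥ z) ⬝ᵥ (V *ᵥ z))

/-- If `(z*, c*)` is an optimal solution of the minority-class reformulation and the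
vectors `S_A e`, `S_B̃ e`, `S_Û e` are linearly independent, then `z* ≠ 0`. -/
theorem minority_optimal_z_ne_zero {d mA mB mU k : ℕ}
    (SA : Matrix (Fin d) (Fin mA) ℝ) (SB : Matrix (Fin d) (Fin mB) ℝ)
    (SU : Matrix (Fin d) (Fin mU) ℝ) (V : Matrix (Fin k) (Fin d) ℝ)
    (C1 Cu lam eps : ℝ) (hC1 : 0 < C1) (hCu : 0 < Cu) (hlam : 0 < lam)
    (heps : eps ∈ Set.Ioo (0 : ℝ) 1)
    (zs : Fin d → ℝ) (cs : ℝ)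
    (hmin : ∀ (z : Fin d → ℝ) (c : ℝ),
      minorityObj SA SB SU V C1 Cu lam eps zs cs ≤ minorityObj SA SB SU V C1 Cu lam eps z c)
    (hli : LinearIndependent ℝ
      ![SA *ᵥ (fun _ => 1), SB *ᵥ (fun _ => 1), SU *ᵥ (fun _ => 1)]) :
    zs ≠ 0 := by
  intro hz0
  set u : Fin d → ℝ :=
    cs • (SA *ᵥ (fun _ => 1)) + (C1 * (1 + cs)) • (SB *ᵥ (fun _ => 1))
      + (Cu * (cs + 1 - eps)) • (SU *ᵥ (fun _ => 1)) with hu_def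
  -- Step 1 : u ⬝ᵥ v = 0 for every direction v
  have hu : ∀ v : Fin d → ℝ, u ⬝ᵥ v = 0 := by
    intro v
    set a : ℝ :=
      (1 / 2) * ((SAᵀ *ᵥ v) ⬝ᵥ (SAᵀ *ᵥ v)) + (C1 / 2) * ((SBᵀ *ᵥ v) ⬝ᵥ (SBᵀ *ᵥ v))
        + (Cu / 2) * ((SUᵀ *ᵥ v) ⬝ᵥ (SUᵀ *ᵥ v)) + (lam / 2) * ((V *ᵥ v) ⬝ᵥ (V *ᵥ v)) with ha_def
    have hb : u ⬝ᵥ v =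
        cs * ((SA *ᵥ (fun _ => 1)) ⬝ᵥ v) + C1 * (1 + cs) * ((SB *ᵥ (fun _ => 1)) ⬝ᵥ v)
          + Cu * (cs + 1 - eps) * ((SU *ᵥ (fun _ => 1)) ⬝ᵥ v) := by
      simp [hu_def, add_dotProduct, smul_dotProduct, smul_eq_mul]
    have key : ∀ t : ℝ, minorityObj SA SB SU V C1 Cu lam eps (t • v) cs
        = a * t ^ 2 + (u ⬝ᵥ v) * t + minorityObj SA SB SU V C1 Cu lam eps 0 cs := by
      intro t
      have e1 : (SAᵀ *ᵥ (t • v) + fun _ => cs)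
          = (fun _ => cs) + t • (SAᵀ *ᵥ v) := by
        rw [mulVec_smul, add_comm]
      have e2 : ((fun _ => 1) + SBᵀ *ᵥ (t • v) + fun _ => cs)
          = (fun _ => (1 + cs : ℝ)) + t • (SBᵀ *ᵥ v) := by
        rw [mulVec_smul]; funext i
        simp only [Pi.add_apply, Pi.smul_apply, smul_eq_mul]; ring
      have e3 : ((fun _ => -1 + eps) - (SUᵀ *ᵥ (t • v) + fun _ => cs))
          = (fun _ => (-1 + eps - cs : ℝ)) + t • (-(SUᵀ *ᵥ v)) := by
        rw [mulVec_smul]; funext i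
        simp only [Pi.sub_apply, Pi.add_apply, Pi.smul_apply, Pi.neg_apply, smul_eq_mul]; ring
      have e1z : (SAᵀ *ᵥ (0 : Fin d → ℝ) + fun _ => cs) = (fun _ => cs : Fin mA → ℝ) := by
        rw [mulVec_zero, zero_add]
      have e2z : ((fun _ => 1) + SBᵀ *ᵥ (0 : Fin d → ℝ) + fun _ => cs)
          = (fun _ => (1 + cs : ℝ) : Fin mB → ℝ) := by
        rw [mulVec_zero]; funext i; simp
      have e3z : ((fun _ => -1 + eps) - (SUᵀ *ᵥ (0 : Fin d → ℝ) + fun _ => cs))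
          = (fun _ => (-1 + eps - cs : ℝ) : Fin mU → ℝ) := by
        rw [mulVec_zero]; funext i; simp [sub_eq_add_neg]
      rw [minorityObj, minorityObj, e1, e2, e3, e1z, e2z, e3z, mulVec_smul, mulVec_zero,
        dot_expand, dot_expand, dot_expand, hb,
        const_dot SA v cs, const_dot SB v (1 + cs)]
      have e4 : (fun _ => (-1 + eps - cs : ℝ) : Fin mU → ℝ) ⬝ᵥ (-(SUᵀ *ᵥ v))
          = -((-1 + eps - cs) * ((SU *ᵥ fun _ => 1) ⬝ᵥ v)) := by
        rw [dotProduct_neg, const_dot SU v (-1 + eps - cs)]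
      have e5 : (-(SUᵀ *ᵥ v)) ⬝ᵥ (-(SUᵀ *ᵥ v)) = (SUᵀ *ᵥ v) ⬝ᵥ (SUᵀ *ᵥ v) := by
        rw [neg_dotProduct, dotProduct_neg, neg_neg]
      have e6 : (t • (V *ᵥ v)) ⬝ᵥ (t • (V *ᵥ v)) = t ^ 2 * ((V *ᵥ v) ⬝ᵥ (V *ᵥ v)) := by
        rw [smul_dotProduct, dotProduct_smul]; simp [smul_eq_mul]; ring
      have e7 : (0 : Fin k → ℝ) ⬝ᵥ (0 : Fin k → ℝ) = 0 := by simp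
      rw [e4, e5, e6, e7, ha_def]
      ring
    have hquad : ∀ t : ℝ, 0 ≤ a * t ^ 2 + (u ⬝ᵥ v) * t := by
      intro t
      have h0 := hmin (t • v) cs
      rw [hz0, key t] at h0
      linarith
    exact quad_coeff a (u ⬝ᵥ v) hquad
  -- Step 2 : u = 0
  have hu0 : u = 0 := by
    have := hu u
    rwa [dotProduct_self_eq_zero] at this
  -- Step 3 : contradiction with linear independence
  have hsum : ∑ i : Fin 3,
      (![cs, C1 * (1 + cs), Cu * (cs + 1 - eps)] i) •
        (![SA *ᵥ (fun _ => 1), SB *ᵥ (fun _ => 1), SU *ᵥ (fun _ => 1)] i) = 0 := by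
    simpa [Fin.sum_univ_three, add_assoc, hu_def] using hu0
  have hall := Fintype.linearIndependent_iff.mp hli
    ![cs, C1 * (1 + cs), Cu * (cs + 1 - eps)] hsum
  have h0 := hall 0
  have h1 := hall 1
  simp at h0 h1
  rcases h1 with h1 | h1
  · exact absurd h1 (ne_of_gt hC1)
  · rw [h0] at h1; linarith
end
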